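/- For every continuous function f on [0,1], the series Σ_{s=1}^∞ f(1/(θ+s)) · (1+θ)/((θ+s)(θ+s+1)) converges for each θ ∈ [0,1] and defines a continuous function 𝔾(f) on [0,1]. -/

import Mathlib

/-- The Gauss (Perron–Frobenius) operator
`𝔾(f)(θ) = Σ_{s=1}^∞ f(1/(θ+s)) · (1+θ)/((θ+s)(θ+s+1))`;
the summation index `n : ℕ` corresponds to `s = n + 1`. -/
noncomputable def gaussOp (f : ℝ → ℝ) (θ : ℝ) : ℝ :=
  ∑' n : ℕ, f (1 / (θ + (n : ℝ) + 1)) *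
    ((1 + θ) / ((θ + (n : ℝ) + 1) * (θ + (n : ℝ) + 2)))

/-- For `f` continuous on `[0,1]`, the series defining `𝔾(f)(θ)` converges for
every `θ ∈ [0,1]` and `𝔾(f)` is continuous on `[0,1]`. -/
theorem gaussOp_summable_and_continuous (f : ℝ → ℝ)
    (hf : ContinuousOn f (Set.Icc (0 : ℝ) 1)) :
    (∀ θ ∈ Set.Icc (0 : ℝ) 1,
      Summable (fun n : ℕ => f (1 / (θ + (n : ℝ) + 1)) *
        ((1 + θ) / ((θ + (n : ℝ) + 1) * (θ + (n : ℝ) + 2))))) ∧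
    ContinuousOn (gaussOp f) (Set.Icc (0 : ℝ) 1) := by
  obtain ⟨C, hC⟩ := isCompact_Icc.exists_bound_of_continuousOn hf
  have hC0 : 0 ≤ C := le_trans (norm_nonneg _) (hC 0 ⟨le_refl 0, zero_le_one⟩)
  set u : ℕ → ℝ := fun n => C * (2 / (((n : ℝ) + 1) * ((n : ℝ) + 2))) with hu
  have hsum2 : Summable (fun n : ℕ => 2 / (((n : ℝ) + 1) * ((n : ℝ) + 2))) := by
    have h1 : Summable (fun n : ℕ => (1 : ℝ) / ((n : ℝ) + 1) ^ 2) := by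
      have := (summable_nat_add_iff 1).mpr
        ((Real.summable_one_div_nat_pow (p := 2)).mpr one_lt_two)
      refine this.congr fun n => ?_
      push_cast
      ring
    refine Summable.of_nonneg_of_le (fun n => by positivity)
      (fun n => ?_) (h1.mul_left 2)
    have hn : (0:ℝ) < (n : ℝ) + 1 := by positivity
    rw [mul_one_div]
    apply div_le_div_of_nonneg_left (by norm_num) (by positivity)
    nlinarith [n.cast_nonneg (α := ℝ)]
  have husum : Summable u := hsum2.mul_left C
  have key : ∀ θ ∈ Set.Icc (0:ℝ) 1, ∀ n : ℕ,
      ‖f (1 / (θ + (n : ℝ) + 1)) *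
        ((1 + θ) / ((θ + (n : ℝ) + 1) * (θ + (n : ℝ) + 2)))‖ ≤ u n := by
    intro θ hθ n
    have hθ0 := hθ.1
    have hθ1 := hθ.2
    have hn0 := n.cast_nonneg (α := ℝ)
    have hpos1 : (0:ℝ) < θ + n + 1 := by linarith
    have hpos2 : (0:ℝ) < θ + n + 2 := by linarith
    have hmem : 1 / (θ + (n:ℝ) + 1) ∈ Set.Icc (0:ℝ) 1 := by
      constructor
      · positivity
      · rw [div_le_one hpos1]; linarith
    rw [norm_mul]
    have hfle := hC _ hmem
    have h2 : ‖(1 + θ) / ((θ + (n:ℝ) + 1) * (θ + (n:ℝ) + 2))‖ ≤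
        2 / (((n:ℝ) + 1) * ((n:ℝ) + 2)) := by
      rw [Real.norm_eq_abs, abs_of_nonneg (by positivity)]
      apply div_le_div₀ (by norm_num) (by linarith) (by positivity)
      nlinarith
    calc ‖f (1 / (θ + (n:ℝ) + 1))‖ * ‖(1 + θ) / ((θ + (n:ℝ) + 1) * (θ + (n:ℝ) + 2))‖
        ≤ C * (2 / (((n:ℝ) + 1) * ((n:ℝ) + 2))) :=
          mul_le_mul hfle h2 (norm_nonneg _) hC0
      _ = u n := rfl
  constructor
  · exact fun θ hθ => Summable.of_norm_bounded husum (key θ hθ)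
  · rw [continuousOn_iff_continuous_restrict]
    have hFc : ∀ n : ℕ, Continuous (fun x : Set.Icc (0:ℝ) 1 =>
        f (1 / ((x:ℝ) + (n : ℝ) + 1)) *
          ((1 + (x:ℝ)) / (((x:ℝ) + (n : ℝ) + 1) * ((x:ℝ) + (n : ℝ) + 2)))) := by
      intro n
      have hd1 : ∀ x : Set.Icc (0:ℝ) 1, ((x:ℝ) + (n:ℝ) + 1) ≠ 0 := by
        intro x
        have := x.2.1
        have := n.cast_nonneg (α := ℝ)
        positivity
      have hd2 : ∀ x : Set.Icc (0:ℝ) 1,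
          (((x:ℝ) + (n:ℝ) + 1) * ((x:ℝ) + (n:ℝ) + 2)) ≠ 0 := by
        intro x
        have := x.2.1
        have := n.cast_nonneg (α := ℝ)
        positivity
      have hcx : Continuous (fun x : Set.Icc (0:ℝ) 1 => (x:ℝ)) := continuous_subtype_val
      have hinner : Continuous (fun x : Set.Icc (0:ℝ) 1 => 1 / ((x:ℝ) + (n:ℝ) + 1)) :=
        Continuous.div continuous_const ((hcx.add continuous_const).add continuous_const) hd1
      have hmaps : ∀ x : Set.Icc (0:ℝ) 1,
          1 / ((x:ℝ) + (n:ℝ) + 1) ∈ Set.Icc (0:ℝ) 1 := by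
        intro x
        have hx0 := x.2.1
        have hx1 := x.2.2
        have hn0 := n.cast_nonneg (α := ℝ)
        have hp : (0:ℝ) < (x:ℝ) + (n:ℝ) + 1 := by linarith
        constructor
        · positivity
        · rw [div_le_one hp]; linarith
      exact (hf.comp_continuous hinner hmaps).mul
        (Continuous.div (continuous_const.add hcx)
          (((hcx.add continuous_const).add continuous_const).mul
            ((hcx.add continuous_const).add continuous_const)) hd2)
    exact continuous_tsum hFc husum (fun n x => key (x:ℝ) x.2 n)
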